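/- Let μ > 0 and ω(ξ) = sqrt(|ξ| * tanh(sqrt(μ)*|ξ|)) for ξ ∈ ℝ^d. Then there are no quadratic resonances: for all ξ₁, ξ₂ ∈ ℝ^d with ξ₁ ≠ 0, ξ₂ ≠ 0, ξ₁ + ξ₂ ≠ 0, and for either choice of sign, (ω(ξ₁) ± ω(ξ₂))² ≠ ω(ξ₁ + ξ₂)². -/

import Mathlib

/-- `sinh t < t cosh t` for `t > 0`. -/
lemma aux_sinh_lt_mul_cosh {t : ℝ} (ht : 0 < t) : Real.sinh t < t * Real.cosh t := by
  have hmono : StrictMonoOn (fun x : ℝ => x * Real.cosh x - Real.sinh x) (Set.Ici 0) := by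
    apply strictMonoOn_of_deriv_pos (convex_Ici 0)
    · exact ((continuous_id.mul Real.continuous_cosh).sub Real.continuous_sinh).continuousOn
    · intro x hx
      rw [interior_Ici] at hx
      have hd : HasDerivAt (fun x : ℝ => x * Real.cosh x - Real.sinh x)
          (1 * Real.cosh x + x * Real.sinh x - Real.cosh x) x :=
        ((hasDerivAt_id x).mul (Real.hasDerivAt_cosh x)).sub (Real.hasDerivAt_sinh x)
      rw [hd.deriv]
      have hx' : 0 < x := hx
      have : 0 < Real.sinh x := Real.sinh_pos_iff.2 hx'
      nlinarith [mul_pos hx' this]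
  have := hmono (Set.self_mem_Ici) (Set.mem_Ici.2 ht.le) ht
  simpa using this

/-- `sinh u / u < sinh v / v` for `0 < u < v`, in product form. -/
lemma aux_sinh_div_mono {u v : ℝ} (hu : 0 < u) (huv : u < v) :
    v * Real.sinh u < u * Real.sinh v := by
  have hmono : StrictMonoOn (fun x : ℝ => Real.sinh x / x) (Set.Ioi 0) := by
    apply strictMonoOn_of_deriv_pos (convex_Ioi 0)
    · exact Real.continuous_sinh.continuousOn.div continuousOn_id
        (fun x hx => ne_of_gt hx)
    · intro x hx
      rw [interior_Ioi] at hx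
      have hd : HasDerivAt (fun x : ℝ => Real.sinh x / x)
          ((Real.cosh x * x - Real.sinh x * 1) / x ^ 2) x :=
        (Real.hasDerivAt_sinh x).div (hasDerivAt_id x) (ne_of_gt hx)
      rw [hd.deriv]
      have hx' : 0 < x := hx
      have h1 : Real.sinh x < x * Real.cosh x := aux_sinh_lt_mul_cosh hx'
      have h2 : (0:ℝ) < x ^ 2 := by positivity
      apply div_pos _ h2
      nlinarith
  have h := hmono (Set.mem_Ioi.2 hu) (Set.mem_Ioi.2 (hu.trans huv)) huv
  have hv : 0 < v := hu.trans huv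
  rw [div_lt_div_iff₀ hu hv] at h
  linarith

/-- `tanh x / x` is strictly decreasing on `(0, ∞)`, in product form. -/
lemma aux_tanh_div_anti {x y : ℝ} (hx : 0 < x) (hxy : x < y) :
    x * Real.tanh y < y * Real.tanh x := by
  have hy : 0 < y := hx.trans hxy
  have hcx : 0 < Real.cosh x := Real.cosh_pos x
  have hcy : 0 < Real.cosh y := Real.cosh_pos y
  have key : (x + y) * Real.sinh (y - x) < (y - x) * Real.sinh (x + y) :=
    aux_sinh_div_mono (by linarith) (by linarith)
  rw [Real.sinh_add, Real.sinh_sub] at key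
  rw [Real.tanh_eq_sinh_div_cosh, Real.tanh_eq_sinh_div_cosh, mul_div_assoc',
    mul_div_assoc', div_lt_div_iff₀ hcy hcx]
  nlinarith

/-- `tanh` is monotone. -/
lemma aux_tanh_le {x y : ℝ} (hxy : x ≤ y) : Real.tanh x ≤ Real.tanh y := by
  have hcx : 0 < Real.cosh x := Real.cosh_pos x
  have hcy : 0 < Real.cosh y := Real.cosh_pos y
  have h : 0 ≤ Real.sinh (y - x) := Real.sinh_nonneg_iff.2 (by linarith)
  rw [Real.sinh_sub] at h
  rw [Real.tanh_eq_sinh_div_cosh, Real.tanh_eq_sinh_div_cosh, div_le_div_iff₀ hcx hcy]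
  nlinarith

lemma aux_tanh_pos {x : ℝ} (hx : 0 < x) : 0 < Real.tanh x := by
  rw [Real.tanh_eq_sinh_div_cosh]
  exact div_pos (Real.sinh_pos_iff.2 hx) (Real.cosh_pos x)

/-- Strict subadditivity of `r ↦ √(r tanh (s r))`. -/
lemma aux_subadd {s p q : ℝ} (hs : 0 < s) (hp : 0 < p) (hq : 0 < q) :
    Real.sqrt ((p + q) * Real.tanh (s * (p + q))) <
      Real.sqrt (p * Real.tanh (s * p)) + Real.sqrt (q * Real.tanh (s * q)) := by
  set z := Real.tanh (s * (p + q)) / (p + q) with hz_def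
  have hpq : 0 < p + q := by linarith
  have hzpos : 0 < z := div_pos (aux_tanh_pos (mul_pos hs hpq)) hpq
  have hz : (p + q) * z = Real.tanh (s * (p + q)) := by
    rw [hz_def]; field_simp
  -- key comparison for a single term
  have key : ∀ a b : ℝ, 0 < a → 0 < b →
      a * Real.sqrt (Real.tanh (s * (a + b)) / (a + b)) <
        Real.sqrt (a * Real.tanh (s * a)) := by
    intro a b ha hb
    have hab : 0 < a + b := by linarith
    have hC : s * a * Real.tanh (s * (a + b)) < s * (a + b) * Real.tanh (s * a) :=
      aux_tanh_div_anti (mul_pos hs ha) (by nlinarith)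
    have h1 : a * Real.tanh (s * (a + b)) < (a + b) * Real.tanh (s * a) :=
      lt_of_mul_lt_mul_left
        (show s * (a * Real.tanh (s * (a + b))) < s * ((a + b) * Real.tanh (s * a)) by
          linarith [hC]) hs.le
    have h2 : a ^ 2 * (Real.tanh (s * (a + b)) / (a + b)) < a * Real.tanh (s * a) := by
      have heq : a ^ 2 * (Real.tanh (s * (a + b)) / (a + b))
          = a * (a * Real.tanh (s * (a + b))) / (a + b) := by ring
      rw [heq, div_lt_iff₀ hab]
      nlinarith [mul_lt_mul_of_pos_left h1 ha]
    calc a * Real.sqrt (Real.tanh (s * (a + b)) / (a + b))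
        = Real.sqrt (a ^ 2 * (Real.tanh (s * (a + b)) / (a + b))) := by
          rw [Real.sqrt_mul (sq_nonneg a), Real.sqrt_sq ha.le]
      _ < Real.sqrt (a * Real.tanh (s * a)) := by
          exact Real.sqrt_lt_sqrt
            (mul_nonneg (sq_nonneg a)
              (div_nonneg (aux_tanh_pos (mul_pos hs hab)).le hab.le)) h2
  have hsplit : Real.sqrt ((p + q) * Real.tanh (s * (p + q)))
      = p * Real.sqrt z + q * Real.sqrt z := by
    have h : (p + q) * Real.tanh (s * (p + q)) = (p + q) ^ 2 * z := by
      rw [hz_def]; field_simp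
    rw [h, Real.sqrt_mul (sq_nonneg _), Real.sqrt_sq hpq.le]
    ring
  rw [hsplit]
  have h1 := key p q hp hq
  have h2 := key q p hq hp
  rw [add_comm q p] at h2
  exact add_lt_add h1 h2

/-- Monotonicity of `r ↦ √(r tanh (s r))`. -/
lemma aux_mono {s c m : ℝ} (hs : 0 < s) (hc : 0 ≤ c) (hcm : c ≤ m) :
    Real.sqrt (c * Real.tanh (s * c)) ≤ Real.sqrt (m * Real.tanh (s * m)) := by
  apply Real.sqrt_le_sqrt
  have ht : Real.tanh (s * c) ≤ Real.tanh (s * m) := aux_tanh_le (by nlinarith)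
  have htn : 0 ≤ Real.tanh (s * c) := by
    rcases eq_or_lt_of_le hc with h | h
    · simp [← h, Real.tanh_zero]
    · exact (aux_tanh_pos (mul_pos hs h)).le
  have hm : 0 ≤ m := hc.trans hcm
  nlinarith

/-- No quadratic resonances for the finite-depth gravity water-wave dispersion
function `ω(ξ) = √(|ξ| tanh(√μ |ξ|))`: for either choice of sign,
`(ω(ξ₁) ± ω(ξ₂))² ≠ ω(ξ₁+ξ₂)²`. -/
theorem stmt4 (d : ℕ) (hd : 1 ≤ d) (μ : ℝ) (hμ : 0 < μ)
    (ω : EuclideanSpace ℝ (Fin d) → ℝ)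
    (hω : ∀ ξ, ω ξ = Real.sqrt (‖ξ‖ * Real.tanh (Real.sqrt μ * ‖ξ‖)))
    (ξ₁ ξ₂ : EuclideanSpace ℝ (Fin d)) (h₁ : ξ₁ ≠ 0) (h₂ : ξ₂ ≠ 0)
    (h₁₂ : ξ₁ + ξ₂ ≠ 0) :
    (ω ξ₁ + ω ξ₂) ^ 2 ≠ ω (ξ₁ + ξ₂) ^ 2 ∧
      (ω ξ₁ - ω ξ₂) ^ 2 ≠ ω (ξ₁ + ξ₂) ^ 2 := by
  set s := Real.sqrt μ with hs_def
  have hs : 0 < s := Real.sqrt_pos.2 hμ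
  set a := ‖ξ₁‖ with ha_def
  set b := ‖ξ₂‖ with hb_def
  set c := ‖ξ₁ + ξ₂‖ with hc_def
  have ha : 0 < a := norm_pos_iff.2 h₁
  have hb : 0 < b := norm_pos_iff.2 h₂
  have hc : 0 < c := norm_pos_iff.2 h₁₂
  have htri1 : c ≤ a + b := norm_add_le ξ₁ ξ₂
  have htri2 : a ≤ c + b := by
    have : ξ₁ = (ξ₁ + ξ₂) - ξ₂ := by abel
    calc a = ‖(ξ₁ + ξ₂) - ξ₂‖ := by rw [← this]
      _ ≤ c + b := norm_sub_le _ _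
  have htri3 : b ≤ c + a := by
    have : ξ₂ = (ξ₁ + ξ₂) - ξ₁ := by abel
    calc b = ‖(ξ₁ + ξ₂) - ξ₁‖ := by rw [← this]
      _ ≤ c + a := norm_sub_le _ _
  set A := ω ξ₁ with hA_def
  set B := ω ξ₂ with hB_def
  set C := ω (ξ₁ + ξ₂) with hC_def
  have hA : A = Real.sqrt (a * Real.tanh (s * a)) := hω ξ₁
  have hB : B = Real.sqrt (b * Real.tanh (s * b)) := hω ξ₂
  have hC : C = Real.sqrt (c * Real.tanh (s * c)) := hω (ξ₁ + ξ₂)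
  have hAnn : 0 ≤ A := by rw [hA]; exact Real.sqrt_nonneg _
  have hBnn : 0 ≤ B := by rw [hB]; exact Real.sqrt_nonneg _
  have hCnn : 0 ≤ C := by rw [hC]; exact Real.sqrt_nonneg _
  -- the three strict triangle inequalities for the dispersion values
  have hCAB : C < A + B := by
    rw [hA, hB, hC]
    calc Real.sqrt (c * Real.tanh (s * c))
        ≤ Real.sqrt ((a + b) * Real.tanh (s * (a + b))) := aux_mono hs hc.le htri1
      _ < _ := aux_subadd hs ha hb
  have hABC : A < B + C := by
    rw [hA, hB, hC]
    calc Real.sqrt (a * Real.tanh (s * a))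
        ≤ Real.sqrt ((b + c) * Real.tanh (s * (b + c))) := by
          apply aux_mono hs ha.le; linarith
      _ < _ := aux_subadd hs hb hc
  have hBAC : B < A + C := by
    rw [hA, hB, hC]
    calc Real.sqrt (b * Real.tanh (s * b))
        ≤ Real.sqrt ((a + c) * Real.tanh (s * (a + c))) := by
          apply aux_mono hs hb.le; linarith
      _ < _ := aux_subadd hs ha hc
  constructor
  · have : C ^ 2 < (A + B) ^ 2 := by nlinarith
    exact ne_of_gt this
  · have : (A - B) ^ 2 < C ^ 2 := sq_lt_sq' (by linarith) (by linarith)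
    exact ne_of_lt this
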